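/- Let G be a non-abelian finite p-group with p ≥ 3, and let V be a faithful finite-dimensional representation of G over ℚ. Then dim V ≥ 2p. -/

import Mathlib

open Polynomial

/-- If `a` commutes with `b`, it commutes with any polynomial evaluated at `b`. -/
lemma commute_aeval' {R S : Type*} [CommSemiring R] [Semiring S] [Algebra R S] {a b : S}
    (h : Commute a b) (q : R[X]) : Commute a (Polynomial.aeval b q) := by
  induction q using Polynomial.induction_on' with
  | add u v hu hv => simpa [map_add] using hu.add_right hv
  | monomial n c =>
      rw [Polynomial.aeval_monomial]
      exact (Algebra.commute_algebraMap_right c a).mul_right (h.pow_right n)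

/-- Restriction commutes with `aeval`. -/
lemma aeval_restrict_apply {R V : Type*} [CommRing R] [AddCommGroup V] [Module R V]
    (f : V →ₗ[R] V) (p : Submodule R V) (hf : ∀ x ∈ p, f x ∈ p) (q : R[X]) (w : p) :
    ((Polynomial.aeval (f.restrict hf) q) w : V) = Polynomial.aeval f q (w : V) := by
  induction q using Polynomial.induction_on' with
  | add u v hu hv => simp [map_add, hu, hv]
  | monomial n c =>
      have hpow : ∀ (n : ℕ) (w : p), ((f.restrict hf ^ n) w : V) = (f ^ n) (w : V) := by
        intro n
        induction n with
        | zero => intro w; simp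
        | succ k ih =>
            intro w
            rw [pow_succ, pow_succ, Module.End.mul_apply, Module.End.mul_apply, ih,
              LinearMap.restrict_coe_apply]
      simp [Polynomial.aeval_monomial, Module.End.mul_apply, hpow]

/-- In a nonabelian finite p-group, there exist `a b` whose commutator is central
of order `p`. -/
lemma exists_central_commutator (p : ℕ) (hp : p.Prime)
    (G : Type*) [Group G] [Finite G] (hG : IsPGroup p G)
    (hna : ¬ ∀ a b : G, a * b = b * a) :
    ∃ a b : G, a * b * a⁻¹ * b⁻¹ ∈ Subgroup.center G ∧ orderOf (a * b * a⁻¹ * b⁻¹) = p := by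
  classical
  haveI : Fact p.Prime := ⟨hp⟩
  set Z := Subgroup.center G with hZdef
  -- the quotient by the center
  let Q := G ⧸ Z
  have hQ : IsPGroup p Q := hG.to_quotient Z
  -- find a₀ not central
  have hZT : ∃ a₀ : G, a₀ ∉ Z := by
    by_contra h
    push_neg at h
    exact hna fun a b => ((Subgroup.mem_center_iff.mp (h a)) b).symm
  obtain ⟨a₀, ha₀⟩ := hZT
  haveI : Nontrivial Q := by
    refine nontrivial_of_ne ((a₀ : G) : Q) 1 fun h => ha₀ ?_
    exact (QuotientGroup.eq_one_iff _).mp h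
  haveI := hQ.center_nontrivial
  obtain ⟨q, hq1⟩ := exists_ne (1 : Subgroup.center Q)
  obtain ⟨qv, hqv⟩ := q
  obtain ⟨a, rfl⟩ := QuotientGroup.mk_surjective qv
  -- all commutators with a are central
  have hcomm : ∀ b : G, a * b * a⁻¹ * b⁻¹ ∈ Z := by
    intro b
    have h1 : ((b : Q)) * (a : Q) = (a : Q) * (b : Q) := Subgroup.mem_center_iff.mp hqv _
    have : ((a * b * a⁻¹ * b⁻¹ : G) : Q) = 1 := by
      rw [QuotientGroup.mk_mul, QuotientGroup.mk_mul, QuotientGroup.mk_mul,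
        QuotientGroup.mk_inv, QuotientGroup.mk_inv, ← h1]
      group
    exact (QuotientGroup.eq_one_iff _).mp this
  -- the commutator map is a homomorphism
  have hmul : ∀ b c : G, a * (b * c) * a⁻¹ * (b * c)⁻¹ =
      (a * b * a⁻¹ * b⁻¹) * (a * c * a⁻¹ * c⁻¹) := by
    intro b c
    have hu : ∀ g : G, g * (a * c * a⁻¹ * c⁻¹) = (a * c * a⁻¹ * c⁻¹) * g :=
      fun g => Subgroup.mem_center_iff.mp (hcomm c) g
    have := hu b⁻¹
    calc a * (b * c) * a⁻¹ * (b * c)⁻¹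
        = a * b * a⁻¹ * ((a * c * a⁻¹ * c⁻¹) * b⁻¹) := by group
      _ = a * b * a⁻¹ * (b⁻¹ * (a * c * a⁻¹ * c⁻¹)) := by rw [← this]
      _ = (a * b * a⁻¹ * b⁻¹) * (a * c * a⁻¹ * c⁻¹) := by group
  let F : G →* G := MonoidHom.mk' (fun b => a * b * a⁻¹ * b⁻¹) hmul
  have hFex : ∃ b, F b ≠ 1 := by
    by_contra h
    push_neg at h
    refine absurd ?_ (fun hmem => hq1 (Subtype.ext ((QuotientGroup.eq_one_iff _).mpr hmem)))
    rw [Subgroup.mem_center_iff]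
    intro g
    have := h g
    simp only [F, MonoidHom.mk'_apply] at this
    have h2 : a * g = g * a := by
      have : a * g * a⁻¹ * g⁻¹ * (g * a) = 1 * (g * a) := by rw [this]
      group at this
      exact this
    exact h2.symm
  obtain ⟨b₀, hb₀⟩ := hFex
  -- the commutator c = F b₀ is central and nontrivial
  obtain ⟨m, hm⟩ := (IsPGroup.iff_orderOf.mp hG) (F b₀)
  have hm0 : m ≠ 0 := by
    rintro rfl
    rw [pow_zero, orderOf_eq_one_iff] at hm
    exact hb₀ hm
  refine ⟨a, b₀ ^ p ^ (m - 1), hcomm _, ?_⟩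
  have hFb : a * b₀ ^ p ^ (m - 1) * a⁻¹ * (b₀ ^ p ^ (m - 1))⁻¹ = (F b₀) ^ p ^ (m - 1) := by
    have := F.map_pow b₀ (p ^ (m - 1))
    simpa [F, MonoidHom.mk'_apply] using this
  rw [hFb]
  -- order of (F b₀) ^ p^(m-1) is p
  have hne : (F b₀) ^ p ^ (m - 1) ≠ 1 := by
    apply pow_ne_one_of_lt_orderOf (pow_ne_zero _ hp.pos.ne')
    rw [hm]
    exact Nat.pow_lt_pow_right hp.one_lt (Nat.sub_lt (Nat.pos_of_ne_zero hm0) one_pos)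
  have hpow : ((F b₀) ^ p ^ (m - 1)) ^ p = 1 := by
    rw [← pow_mul, ← pow_succ, Nat.sub_add_cancel (Nat.pos_of_ne_zero hm0), ← hm,
      pow_orderOf_eq_one]
  have hdvd : orderOf ((F b₀) ^ p ^ (m - 1)) ∣ p := orderOf_dvd_of_pow_eq_one hpow
  rcases (Nat.Prime.eq_one_or_self_of_dvd hp _ hdvd) with h1 | h1
  · exact absurd (orderOf_eq_one_iff.mp h1) hne
  · exact h1


set_option maxHeartbeats 800000 in
lemma aux_tower (p : ℕ) (hp : p.Prime) (hp3 : 3 ≤ p)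
    (W : Type*) [AddCommGroup W] [Module ℚ W] [FiniteDimensional ℚ W] [Nontrivial W]
    (A₁ B₁ Z₁ : Module.End ℚ W)
    (hA₁ : Function.Bijective A₁) (hB₁ : Function.Bijective B₁)
    (hZA : Commute A₁ Z₁) (hZB : Commute B₁ Z₁)
    (hroot : Polynomial.aeval Z₁ (cyclotomic p ℚ) = 0)
    (hkey : A₁ * B₁ = Z₁ * (B₁ * A₁)) :
    (p - 1) * p ≤ Module.finrank ℚ W := by
  classical
  haveI : Fact p.Prime := ⟨hp⟩
  haveI : Fact (Irreducible (cyclotomic p ℚ)) := ⟨cyclotomic.irreducible_rat hp.pos⟩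
  have hann : ∀ g ∈ Ideal.span ({cyclotomic p ℚ} : Set ℚ[X]), Polynomial.aeval Z₁ g = 0 := by
    intro g hg
    rw [Ideal.mem_span_singleton] at hg
    obtain ⟨c, rfl⟩ := hg
    rw [map_mul, hroot, zero_mul]
  let K := AdjoinRoot (cyclotomic p ℚ)
  let φ : K →+* Module.End ℚ W :=
    Ideal.Quotient.lift (Ideal.span ({cyclotomic p ℚ} : Set ℚ[X]))
      (Polynomial.aeval Z₁).toRingHom hann
  have hφmk : ∀ g : ℚ[X], φ (AdjoinRoot.mk (cyclotomic p ℚ) g) = Polynomial.aeval Z₁ g :=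
    fun g => Ideal.Quotient.lift_mk _ _ _
  have hφalg : ∀ q : ℚ, φ (algebraMap ℚ K q) = algebraMap ℚ (Module.End ℚ W) q := by
    intro q
    rw [show algebraMap ℚ K = AdjoinRoot.of (cyclotomic p ℚ) from RingHom.ext_rat _ _, AdjoinRoot.of, RingHom.comp_apply, hφmk, Polynomial.aeval_C]
  letI : Module K W := Module.compHom W φ
  have hsmul : ∀ (k : K) (w : W), k • w = φ k w := fun _ _ => rfl
  haveI : IsScalarTower ℚ K W := by
    constructor
    intro q k w
    rw [hsmul, Algebra.smul_def, map_mul, hφalg, hsmul]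
    simp [Module.algebraMap_end_apply]
  haveI : FiniteDimensional K W := FiniteDimensional.right ℚ K W
  set d := Module.finrank K W with hddef
  have hd0 : 0 < d := Module.finrank_pos
  -- K-linearity of maps commuting with Z₁
  have hKlin : ∀ T₁ : Module.End ℚ W, Commute T₁ Z₁ → ∀ (k : K) (w : W),
      T₁ (k • w) = k • T₁ w := by
    intro T₁ hT₁ k w
    induction k using AdjoinRoot.induction_on with
    | ih g =>
      rw [hsmul, hsmul, hφmk]
      have hc : Commute T₁ (Polynomial.aeval Z₁ g) := commute_aeval' hT₁ g
      have := congrArg (fun f : Module.End ℚ W => f w) hc.eq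
      simpa [Module.End.mul_apply] using this
  set A₂ : W →ₗ[K] W :=
    { toFun := A₁, map_add' := fun x y => map_add A₁ x y,
      map_smul' := fun k w => hKlin A₁ hZA k w } with hA₂def
  set B₂ : W →ₗ[K] W :=
    { toFun := B₁, map_add' := fun x y => map_add B₁ x y,
      map_smul' := fun k w => hKlin B₁ hZB k w } with hB₂def
  set ζ : K := AdjoinRoot.root (cyclotomic p ℚ) with hζdef
  have hrootact : ∀ w : W, ζ • w = Z₁ w := by
    intro w
    rw [hsmul, hζdef, ← AdjoinRoot.mk_X, hφmk, Polynomial.aeval_X]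
  have hkey2 : A₂ ∘ₗ B₂ = ζ • (B₂ ∘ₗ A₂) := by
    apply LinearMap.ext
    intro w
    simp only [LinearMap.comp_apply, LinearMap.smul_apply]
    rw [hrootact]
    show A₁ (B₁ w) = Z₁ (B₁ (A₁ w))
    have := congrArg (fun f : Module.End ℚ W => f w) hkey
    simpa [Module.End.mul_apply] using this
  have hdet := congrArg LinearMap.det hkey2
  rw [LinearMap.det_comp, LinearMap.det_smul, LinearMap.det_comp] at hdet
  have hA₂bij : Function.Bijective A₂ := hA₁
  have hB₂bij : Function.Bijective B₂ := hB₁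
  have hdetA : LinearMap.det A₂ ≠ 0 :=
    (LinearMap.isUnit_det A₂ ((Module.End.isUnit_iff A₂).mpr hA₂bij)).ne_zero
  have hdetB : LinearMap.det B₂ ≠ 0 :=
    (LinearMap.isUnit_det B₂ ((Module.End.isUnit_iff B₂).mpr hB₂bij)).ne_zero
  have hζd : ζ ^ d = 1 := by
    have hne : LinearMap.det A₂ * LinearMap.det B₂ ≠ 0 := mul_ne_zero hdetA hdetB
    have h2 : (1 : K) * (LinearMap.det A₂ * LinearMap.det B₂) =
        ζ ^ d * (LinearMap.det A₂ * LinearMap.det B₂) := by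
      linear_combination hdet
    exact (mul_right_cancel₀ hne h2).symm
  have hζroot : Polynomial.aeval ζ (cyclotomic p ℚ) = 0 := by
    rw [Polynomial.aeval_def, show algebraMap ℚ K = AdjoinRoot.of (cyclotomic p ℚ) from RingHom.ext_rat _ _]
    exact AdjoinRoot.eval₂_root _
  have hfact : (cyclotomic p ℚ) * (X - 1 : ℚ[X]) = X ^ p - 1 :=
    cyclotomic_prime_mul_X_sub_one ℚ p
  have hζp : ζ ^ p = 1 := by
    have h1 : Polynomial.aeval ζ ((cyclotomic p ℚ) * (X - 1)) = 0 := by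
      rw [map_mul, hζroot, zero_mul]
    rw [hfact] at h1
    have h2 : ζ ^ p - 1 = 0 := by simpa using h1
    linear_combination h2
  have hζ1 : ζ ≠ 1 := by
    intro h
    rw [h] at hζroot
    have h0 : (algebraMap ℚ K) ((cyclotomic p ℚ).eval 1) = 0 := by
      rw [← hζroot, Polynomial.aeval_def, Polynomial.eval₂_at_one]
    rw [Polynomial.eval_one_cyclotomic_prime] at h0
    have hp0 : ((p : ℕ) : ℚ) ≠ 0 := Nat.cast_ne_zero.mpr hp.pos.ne'
    exact hp0 ((algebraMap ℚ K).injective (by simpa using h0))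
  have horder : orderOf ζ = p := by
    have h1 : orderOf ζ ∣ p := orderOf_dvd_of_pow_eq_one hζp
    rcases hp.eq_one_or_self_of_dvd _ h1 with h | h
    · exact absurd (orderOf_eq_one_iff.mp h) hζ1
    · exact h
  have hpd : p ∣ d := by rw [← horder]; exact orderOf_dvd_of_pow_eq_one hζd
  have hdp : p ≤ d := Nat.le_of_dvd hd0 hpd
  have hΦne : cyclotomic p ℚ ≠ 0 := Polynomial.cyclotomic_ne_zero p ℚ
  have hrankK : Module.finrank ℚ K = p - 1 := by
    have h1 : Module.finrank ℚ K = (cyclotomic p ℚ).natDegree := by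
      rw [(AdjoinRoot.powerBasis hΦne).finrank]
      rfl
    rw [h1, Polynomial.natDegree_cyclotomic, Nat.totient_prime hp]
  have htower : Module.finrank ℚ K * d = Module.finrank ℚ W :=
    Module.finrank_mul_finrank ℚ K W
  calc (p - 1) * p ≤ (p - 1) * d := Nat.mul_le_mul_left _ hdp
    _ = Module.finrank ℚ W := by rw [← htower, hrankK]

set_option maxHeartbeats 800000 in
/-- Core linear algebra fact. -/
lemma aux_lin (p : ℕ) (hp : p.Prime) (hp3 : 3 ≤ p)
    (V : Type*) [AddCommGroup V] [Module ℚ V] [FiniteDimensional ℚ V]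
    (A B : (Module.End ℚ V)ˣ) (Z : Module.End ℚ V)
    (hZ1 : Z ≠ 1) (hZp : Z ^ p = 1)
    (hZA : Commute Z (A : Module.End ℚ V)) (hZB : Commute Z (B : Module.End ℚ V))
    (hcomm : (A : Module.End ℚ V) * B = Z * ((B : Module.End ℚ V) * A)) :
    2 * p ≤ Module.finrank ℚ V := by
  classical
  haveI : Fact p.Prime := ⟨hp⟩
  set Φ : ℚ[X] := Polynomial.cyclotomic p ℚ with hΦdef
  set S : Module.End ℚ V := Polynomial.aeval Z Φ with hSdef
  set W : Submodule ℚ V := LinearMap.ker S with hWdef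
  have hfact : Φ * (X - 1 : ℚ[X]) = X ^ p - 1 := cyclotomic_prime_mul_X_sub_one ℚ p
  have hSZ : S * (Z - 1) = 0 := by
    have h1 : Polynomial.aeval Z (Φ * (X - 1)) = Polynomial.aeval Z (X ^ p - 1 : ℚ[X]) := by
      rw [hfact]
    simpa [map_mul, map_sub, map_pow, hZp] using h1
  have hWne : W ≠ ⊥ := by
    intro hW
    apply hZ1
    have hSinj : Function.Injective S := LinearMap.ker_eq_bot.mp hW
    ext x
    have h0 : S ((Z - 1) x) = S 0 := by
      have := congrArg (fun f : Module.End ℚ V => f x) hSZ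
      simpa [Module.End.mul_apply] using this
    have := hSinj h0
    simpa [LinearMap.sub_apply] using congrArg (· + x) this
  haveI : Nontrivial W := Submodule.nontrivial_iff_ne_bot.mpr hWne
  have hrestr : ∀ T : Module.End ℚ V, Commute Z T → ∀ x ∈ W, T x ∈ W := by
    intro T hT x hx
    have hTS : Commute T S := commute_aeval' hT.symm Φ
    have h1 : S (T x) = T (S x) := by
      have := congrArg (fun f : Module.End ℚ V => f x) hTS.eq
      simpa [Module.End.mul_apply] using this.symm
    simp only [hWdef, LinearMap.mem_ker] at hx ⊢
    rw [h1, hx, map_zero]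
  set A₁ : W →ₗ[ℚ] W := LinearMap.restrict _ (hrestr _ hZA) with hA₁def
  set B₁ : W →ₗ[ℚ] W := LinearMap.restrict _ (hrestr _ hZB) with hB₁def
  set Z₁ : W →ₗ[ℚ] W := LinearMap.restrict _ (hrestr _ (Commute.refl Z)) with hZ₁def
  have hZ₁root : Polynomial.aeval Z₁ Φ = 0 := by
    ext w
    rw [hZ₁def, aeval_restrict_apply]
    have hw := w.2
    simp only [hWdef, LinearMap.mem_ker, hSdef] at hw
    simpa using hw
  have hcoe : ∀ (T : Module.End ℚ V) (hT : Commute Z T) (w : W),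
      ((LinearMap.restrict T (hrestr T hT)) w : V) = T w := fun T hT w =>
    LinearMap.restrict_coe_apply _ _ _
  have hcommute_res : ∀ (T : Module.End ℚ V) (hT : Commute Z T),
      Commute (LinearMap.restrict T (hrestr T hT)) Z₁ := by
    intro T hT
    apply LinearMap.ext
    intro w
    apply Subtype.ext
    simp only [Module.End.mul_apply]
    rw [hZ₁def, hcoe _ hT, LinearMap.restrict_coe_apply, hcoe _ (Commute.refl Z),
      LinearMap.restrict_coe_apply]
    have := congrArg (fun f : Module.End ℚ V => f (w : V)) hT.eq
    simpa [Module.End.mul_apply] using this.symm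
  have hbij : ∀ (T : (Module.End ℚ V)ˣ) (hT : Commute Z (T : Module.End ℚ V)),
      Function.Bijective (LinearMap.restrict (T : Module.End ℚ V) (hrestr _ hT)) := by
    intro T hT
    constructor
    · intro x y hxy
      apply Subtype.ext
      have h1 : (T : Module.End ℚ V) x = (T : Module.End ℚ V) y := by
        rw [← hcoe _ hT, ← hcoe _ hT, hxy]
      exact ((Module.End.isUnit_iff _).mp T.isUnit).injective h1
    · intro y
      refine ⟨LinearMap.restrict ((T⁻¹ : (Module.End ℚ V)ˣ) : Module.End ℚ V)
        (hrestr _ hT.units_inv_right) y, ?_⟩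
      apply Subtype.ext
      rw [hcoe _ hT, LinearMap.restrict_coe_apply, ← Module.End.mul_apply, T.mul_inv,
        Module.End.one_apply]
  have hA₁bij : Function.Bijective A₁ := by rw [hA₁def]; exact hbij A hZA
  have hB₁bij : Function.Bijective B₁ := by rw [hB₁def]; exact hbij B hZB
  have hAZ₁ : Commute A₁ Z₁ := by rw [hA₁def]; exact hcommute_res _ hZA
  have hBZ₁ : Commute B₁ Z₁ := by rw [hB₁def]; exact hcommute_res _ hZB
  have hkey : A₁ * B₁ = Z₁ * (B₁ * A₁) := by
    ext w
    simp only [Module.End.mul_apply]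
    rw [hA₁def, hB₁def, hZ₁def]
    rw [hcoe _ hZA, LinearMap.restrict_coe_apply, hcoe _ (Commute.refl Z),
      LinearMap.restrict_coe_apply, LinearMap.restrict_coe_apply]
    have := congrArg (fun f : Module.End ℚ V => f (w : V)) hcomm
    simpa [Module.End.mul_apply] using this
  calc 2 * p ≤ (p - 1) * p := Nat.mul_le_mul_right p (by omega)
    _ ≤ Module.finrank ℚ W := aux_tower p hp hp3 W A₁ B₁ Z₁ hA₁bij hB₁bij hAZ₁ hBZ₁
        hZ₁root hkey
    _ ≤ Module.finrank ℚ V := Submodule.finrank_le W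

theorem stmt4 (p : ℕ) (hp : p.Prime) (hp3 : 3 ≤ p)
    (G : Type*) [Group G] [Finite G] (hG : IsPGroup p G)
    (hna : ¬ ∀ a b : G, a * b = b * a)
    (V : Type*) [AddCommGroup V] [Module ℚ V] [FiniteDimensional ℚ V]
    (ρ : Representation ℚ G V) (hfaithful : Function.Injective ρ) :
    2 * p ≤ Module.finrank ℚ V := by
  obtain ⟨a, b, hzZ, hzord⟩ := exists_central_commutator p hp G hG hna
  set z : G := a * b * a⁻¹ * b⁻¹ with hzdef
  have hz1 : z ≠ 1 := by
    intro h
    rw [h, orderOf_one] at hzord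
    exact hp.one_lt.ne hzord
  have hZ1 : ρ z ≠ 1 := by
    intro h
    exact hz1 (hfaithful (h.trans (map_one ρ).symm))
  have hZp : ρ z ^ p = 1 := by
    rw [← map_pow, ← hzord, pow_orderOf_eq_one, map_one]
  have hZA : Commute (ρ z) ((ρ.toHomUnits a : (Module.End ℚ V)ˣ) : Module.End ℚ V) := by
    rw [MonoidHom.coe_toHomUnits]
    have : z * a = a * z := (Subgroup.mem_center_iff.mp hzZ a).symm
    calc ρ z * ρ a = ρ (z * a) := (map_mul ρ z a).symm
      _ = ρ (a * z) := by rw [this]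
      _ = ρ a * ρ z := map_mul ρ a z
  have hZB : Commute (ρ z) ((ρ.toHomUnits b : (Module.End ℚ V)ˣ) : Module.End ℚ V) := by
    rw [MonoidHom.coe_toHomUnits]
    have : z * b = b * z := (Subgroup.mem_center_iff.mp hzZ b).symm
    calc ρ z * ρ b = ρ (z * b) := (map_mul ρ z b).symm
      _ = ρ (b * z) := by rw [this]
      _ = ρ b * ρ z := map_mul ρ b z
  have hab : a * b = z * (b * a) := by rw [hzdef]; group
  have hcomm : ((ρ.toHomUnits a : (Module.End ℚ V)ˣ) : Module.End ℚ V) * (ρ.toHomUnits b) =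
      ρ z * (((ρ.toHomUnits b : (Module.End ℚ V)ˣ) : Module.End ℚ V) * (ρ.toHomUnits a)) := by
    rw [MonoidHom.coe_toHomUnits, MonoidHom.coe_toHomUnits]
    rw [← map_mul, ← map_mul, ← map_mul, ← hab]
  exact aux_lin p hp hp3 V (ρ.toHomUnits a) (ρ.toHomUnits b) (ρ z) hZ1 hZp hZA hZB hcomm
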